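/- If a labeled rooted forest σ on n = m + k vertices is a disjoint union τ ∪ ν of labeled rooted forests τ on m vertices and ν on k vertices sharing no isomorphic connected component, then the orbit representation satisfies o(σ) ≅ Ind_{S_m × S_k}^{S_n} (o(τ) ⊠ o(ν)); equivalently ch(o(σ)) = ch(o(τ)) · ch(o(ν)). -/

import Mathlib

/-- Iterate of a partial transformation on `Fin n`. -/
def iterPT {n : ℕ} (f : Fin n → Option (Fin n)) : ℕ → Fin n → Option (Fin n)
  | 0 => fun x => some x
  | k + 1 => fun x => (f x).bind (iterPT f k)

/-- A partial transformation is nilpotent iff its digraph has no directed cycle. -/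
def Nilp {n : ℕ} (f : Fin n → Option (Fin n)) : Prop :=
  ∀ (x : Fin n) (k : ℕ), 0 < k → iterPT f k x ≠ some x

/-- Cardinality of the domain of a partial transformation. -/
def domcard {n : ℕ} (f : Fin n → Option (Fin n)) : ℕ :=
  (Finset.univ.filter fun i => (f i).isSome).card

/-- Conjugation action of the symmetric group on partial transformations. -/
def conjPT {n : ℕ} (w : Equiv.Perm (Fin n)) (f : Fin n → Option (Fin n)) :
    Fin n → Option (Fin n) := fun x => (f (w⁻¹ x)).map w

/-- Disjoint union of a forest on `[m]` and a forest on `[k]`, on `[m+k]`. -/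
def joinPT {m k : ℕ} (f : Fin m → Option (Fin m)) (g : Fin k → Option (Fin k)) :
    Fin (m+k) → Option (Fin (m+k)) := fun x =>
  if h : x.val < m then (f ⟨x.val, h⟩).map (Fin.castLE (Nat.le_add_right m k))
  else (g ⟨x.val - m, by omega⟩).map (fun j => ⟨m + j.val, by omega⟩)

/-- `z` is a descendant of `a` in the forest of `f`. -/
def Desc {n : ℕ} (f : Fin n → Option (Fin n)) (z a : Fin n) : Prop :=
  ∃ j : ℕ, iterPT f j z = some a

-- basics

theorem Equiv.Perm.apply_inv_self {α : Type*} (f : Equiv.Perm α) (x : α) : f (f⁻¹ x) = x :=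
  Equiv.apply_symm_apply f x

theorem Equiv.Perm.inv_apply_self {α : Type*} (f : Equiv.Perm α) (x : α) : f⁻¹ (f x) = x :=
  Equiv.symm_apply_apply f x

lemma iterPT_add {n : ℕ} (f : Fin n → Option (Fin n)) (i j : ℕ) (x : Fin n) :
    iterPT f (i+j) x = (iterPT f i x).bind (iterPT f j) := by
  induction i generalizing x with
  | zero => simp [iterPT]
  | succ i ih =>
      have : i + 1 + j = (i + j) + 1 := by omega
      rw [this]
      show (f x).bind (iterPT f (i+j)) = ((f x).bind (iterPT f i)).bind (iterPT f j)
      cases f x with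
      | none => rfl
      | some y => simpa using ih y

lemma conjPT_one {n : ℕ} (f : Fin n → Option (Fin n)) : conjPT 1 f = f := by
  funext x; simp [conjPT]

lemma conjPT_mul {n : ℕ} (a b : Equiv.Perm (Fin n)) (f : Fin n → Option (Fin n)) :
    conjPT (a*b) f = conjPT a (conjPT b f) := by
  funext x
  simp [conjPT, Option.map_map, Function.comp_def, Equiv.Perm.mul_apply]

lemma conjPT_apply {n : ℕ} {u : Equiv.Perm (Fin n)} {f : Fin n → Option (Fin n)}
    (h : conjPT u f = f) (x : Fin n) : f (u x) = (f x).map u := by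
  have := congrFun h (u x)
  simp [conjPT] at this
  rw [← this]

lemma conjPT_inv_self {n : ℕ} {u : Equiv.Perm (Fin n)} {f : Fin n → Option (Fin n)}
    (h : conjPT u f = f) : conjPT u⁻¹ f = f := by
  have h2 : conjPT u⁻¹ (conjPT u f) = conjPT u⁻¹ f := by rw [h]
  rw [← conjPT_mul, inv_mul_cancel, conjPT_one] at h2
  exact h2.symm

lemma iterPT_conj {n : ℕ} {u : Equiv.Perm (Fin n)} {f : Fin n → Option (Fin n)}
    (h : conjPT u f = f) (j : ℕ) (x : Fin n) :
    iterPT f j (u x) = (iterPT f j x).map u := by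
  induction j generalizing x with
  | zero => simp [iterPT]
  | succ j ih =>
      show (f (u x)).bind (iterPT f j) = ((f x).bind (iterPT f j)).map u
      rw [conjPT_apply h]
      cases f x with
      | none => rfl
      | some y => simpa using ih y

lemma iter_ne {n : ℕ} {f : Fin n → Option (Fin n)} (hf : Nilp f) {z y : Fin n} {i j : ℕ}
    (hij : i < j) (hi : iterPT f i z = some y) (hj : iterPT f j z = some y) : False := by
  have h := iterPT_add f i (j - i) z
  rw [show i + (j - i) = j from by omega, hi, hj] at h
  exact hf y (j - i) (by omega) h.symm

lemma exists_root {n : ℕ} {f : Fin n → Option (Fin n)} (hf : Nilp f) (z : Fin n) :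
    ∃ (a : Fin n) (j : ℕ), iterPT f j z = some a ∧ f a = none := by
  classical
  have hex : ∃ j, iterPT f j z = none := by
    by_contra hc
    push_neg at hc
    have hsome : ∀ j : Fin (n+1), (iterPT f (j:ℕ) z).isSome := by
      intro j
      cases hj : iterPT f (j:ℕ) z with
      | none => exact absurd hj (hc j)
      | some y => simp
    have hinj : Function.Injective (fun j : Fin (n+1) => (iterPT f (j:ℕ) z).get (hsome j)) := by
      intro i j hij
      simp only at hij
      by_contra hne
      have hi := Option.some_get (hsome i)
      have hj := Option.some_get (hsome j)
      rw [hij] at hi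
      replace hi := hi.symm
      replace hj := hj.symm
      rcases Nat.lt_trichotomy (i:ℕ) (j:ℕ) with h | h | h
      · exact iter_ne hf h hi hj
      · exact hne (Fin.ext h)
      · exact iter_ne hf h hj hi
    have := Fintype.card_le_of_injective _ hinj
    simp at this
  obtain ⟨j0, hj0⟩ := hex
  have hEx : ∃ j, iterPT f j z = none := ⟨j0, hj0⟩
  have hpos : 0 < Nat.find hEx := by
    rcases Nat.eq_zero_or_pos (Nat.find hEx) with h | h
    · exfalso; have := Nat.find_spec hEx
      rw [h] at this; simp [iterPT] at this
    · exact h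
  set J := Nat.find hEx with hJ
  have hJspec : iterPT f J z = none := Nat.find_spec hEx
  have hlt : iterPT f (J-1) z ≠ none := Nat.find_min hEx (by omega)
  cases ha : iterPT f (J-1) z with
  | none => exact absurd ha hlt
  | some a =>
      refine ⟨a, J-1, ha, ?_⟩
      have := iterPT_add f (J-1) 1 z
      rw [show J - 1 + 1 = J from by omega, hJspec, ha] at this
      simp [iterPT] at this
      exact this.symm

-- join lemmas
variable {m k : ℕ}

def castL : Fin m → Fin (m+k) := Fin.castLE (Nat.le_add_right m k)
def castR : Fin k → Fin (m+k) := fun j => ⟨m + j.val, by omega⟩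

lemma castL_lt (x : Fin m) : (castL (k := k) x).val < m := x.2
lemma castR_not_lt (x : Fin k) : ¬ (castR (m := m) x).val < m := by simp [castR]

lemma castL_inj : Function.Injective (castL (m := m) (k := k)) := by
  intro a b h; have := congrArg Fin.val h; simp [castL] at this; exact Fin.ext this
lemma castR_inj : Function.Injective (castR (m := m) (k := k)) := by
  intro a b h; have := congrArg Fin.val h; simp [castR] at this; exact Fin.ext this

lemma joinPT_castL (f : Fin m → Option (Fin m)) (g : Fin k → Option (Fin k)) (x : Fin m) :
    joinPT f g (castL x) = (f x).map castL := by
  have hx : (castL (k := k) x).val < m := x.2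
  simp only [joinPT, dif_pos hx]
  rfl

lemma joinPT_castR (f : Fin m → Option (Fin m)) (g : Fin k → Option (Fin k)) (x : Fin k) :
    joinPT f g (castR x) = (g x).map castR := by
  have h : ¬ (castR (m := m) x).val < m := castR_not_lt x
  simp only [joinPT, dif_neg h]
  have : (⟨(castR (m := m) x).val - m, by omega⟩ : Fin k) = x := by
    simp [castR]
  rw [this]
  rfl

lemma iter_join_castL (f : Fin m → Option (Fin m)) (g : Fin k → Option (Fin k)) (j : ℕ)
    (x : Fin m) : iterPT (joinPT f g) j (castL x) = (iterPT f j x).map castL := by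
  induction j generalizing x with
  | zero => simp [iterPT]
  | succ j ih =>
      show (joinPT f g (castL x)).bind _ = ((f x).bind (iterPT f j)).map castL
      rw [joinPT_castL]
      cases f x with
      | none => rfl
      | some y => simpa using ih y

lemma iter_join_castR (f : Fin m → Option (Fin m)) (g : Fin k → Option (Fin k)) (j : ℕ)
    (x : Fin k) : iterPT (joinPT f g) j (castR x) = (iterPT g j x).map castR := by
  induction j generalizing x with
  | zero => simp [iterPT]
  | succ j ih =>
      show (joinPT f g (castR x)).bind _ = ((g x).bind (iterPT g j)).map castR
      rw [joinPT_castR]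
      cases g x with
      | none => rfl
      | some y => simpa using ih y

lemma nilp_join {f : Fin m → Option (Fin m)} {g : Fin k → Option (Fin k)}
    (hf : Nilp f) (hg : Nilp g) : Nilp (joinPT f g) := by
  intro x j hj hx
  by_cases h : x.val < m
  · have hx' : x = castL ⟨x.val, h⟩ := rfl
    rw [hx'] at hx
    rw [iter_join_castL] at hx
    cases hfx : iterPT f j ⟨x.val, h⟩ with
    | none => rw [hfx] at hx; simp at hx
    | some y =>
        rw [hfx] at hx
        simp only [Option.map_some] at hx
        have := castL_inj (Option.some_injective _ hx)
        exact hf _ j hj (by rw [hfx, this])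
  · have hx' : x = castR ⟨x.val - m, by omega⟩ := by
      simp [castR]; exact Fin.ext (by simp; omega)
    rw [hx'] at hx
    rw [iter_join_castR] at hx
    cases hfx : iterPT g j ⟨x.val - m, by omega⟩ with
    | none => rw [hfx] at hx; simp at hx
    | some y =>
        rw [hfx] at hx
        simp only [Option.map_some] at hx
        have := castR_inj (Option.some_injective _ hx)
        exact hg _ j hj (by rw [hfx, this])

-- block permutations
def Blk {m k : ℕ} (v : Equiv.Perm (Fin (m+k))) : Prop := ∀ x : Fin (m+k), (v x).val < m ↔ x.val < m

lemma Blk_one : Blk (m := m) (k := k) 1 := fun _ => Iff.rfl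

lemma Blk_mul {a b : Equiv.Perm (Fin (m+k))} (ha : Blk a) (hb : Blk b) : Blk (a*b) := by
  intro x; rw [Equiv.Perm.mul_apply, ha, hb]

lemma Blk_inv {a : Equiv.Perm (Fin (m+k))} (ha : Blk a) : Blk a⁻¹ := by
  intro x
  conv_rhs => rw [← Equiv.Perm.apply_inv_self a x]
  rw [ha]

lemma castL_val (x : Fin m) : (castL (k := k) x).val = x.val := rfl
lemma castR_val (x : Fin k) : (castR (m := m) x).val = m + x.val := rfl

lemma cases_LR (x : Fin (m+k)) : (∃ i, x = castL i) ∨ (∃ j, x = castR j) := by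
  by_cases h : x.val < m
  · exact Or.inl ⟨⟨x.val, h⟩, Fin.ext rfl⟩
  · exact Or.inr ⟨⟨x.val - m, by omega⟩, Fin.ext (by simp only [castR_val, Fin.val_mk]; omega)⟩

lemma perm_ext_LR {u v : Equiv.Perm (Fin (m+k))}
    (hL : ∀ i, u (castL i) = v (castL i)) (hR : ∀ j, u (castR j) = v (castR j)) : u = v := by
  apply Equiv.ext
  intro x
  rcases cases_LR x with ⟨i, rfl⟩ | ⟨j, rfl⟩
  · exact hL i
  · exact hR j

def jfun (vx : Equiv.Perm (Fin m)) (vy : Equiv.Perm (Fin k)) : Fin (m+k) → Fin (m+k) :=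
  fun x => if h : x.val < m then castL (vx ⟨x.val, h⟩) else castR (vy ⟨x.val - m, by omega⟩)

lemma jfun_castL (vx : Equiv.Perm (Fin m)) (vy : Equiv.Perm (Fin k)) (i : Fin m) :
    jfun vx vy (castL i) = castL (vx i) := by
  unfold jfun
  split
  · rfl
  · next h => exact absurd i.2 h

lemma jfun_castR (vx : Equiv.Perm (Fin m)) (vy : Equiv.Perm (Fin k)) (j : Fin k) :
    jfun vx vy (castR j) = castR (vy j) := by
  unfold jfun
  split
  · next h => exact absurd h (castR_not_lt j)
  · congr 2
    exact Fin.ext (show m + j.val - m = j.val by omega)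

def joinPerm (vx : Equiv.Perm (Fin m)) (vy : Equiv.Perm (Fin k)) : Equiv.Perm (Fin (m+k)) where
  toFun := jfun vx vy
  invFun := jfun vx⁻¹ vy⁻¹
  left_inv x := by
    rcases cases_LR x with ⟨i, rfl⟩ | ⟨j, rfl⟩
    · show jfun vx⁻¹ vy⁻¹ (jfun vx vy (castL i)) = castL i
      rw [jfun_castL, jfun_castL, Equiv.Perm.inv_apply_self]
    · show jfun vx⁻¹ vy⁻¹ (jfun vx vy (castR j)) = castR j
      rw [jfun_castR, jfun_castR, Equiv.Perm.inv_apply_self]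
  right_inv x := by
    rcases cases_LR x with ⟨i, rfl⟩ | ⟨j, rfl⟩
    · show jfun vx vy (jfun vx⁻¹ vy⁻¹ (castL i)) = castL i
      rw [jfun_castL, jfun_castL, Equiv.Perm.apply_inv_self]
    · show jfun vx vy (jfun vx⁻¹ vy⁻¹ (castR j)) = castR j
      rw [jfun_castR, jfun_castR, Equiv.Perm.apply_inv_self]

lemma joinPerm_castL (vx : Equiv.Perm (Fin m)) (vy : Equiv.Perm (Fin k)) (x : Fin m) :
    joinPerm vx vy (castL x) = castL (vx x) := jfun_castL vx vy x

lemma joinPerm_castR (vx : Equiv.Perm (Fin m)) (vy : Equiv.Perm (Fin k)) (x : Fin k) :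
    joinPerm vx vy (castR x) = castR (vy x) := jfun_castR vx vy x

lemma Blk_joinPerm (vx : Equiv.Perm (Fin m)) (vy : Equiv.Perm (Fin k)) :
    Blk (joinPerm vx vy) := by
  intro x
  rcases cases_LR x with ⟨i, rfl⟩ | ⟨j, rfl⟩
  · rw [joinPerm_castL]
    simp [castL_val, i.2]
  · rw [joinPerm_castR]
    simp [castR_val]

lemma joinPerm_inv_castL (vx : Equiv.Perm (Fin m)) (vy : Equiv.Perm (Fin k)) (x : Fin m) :
    (joinPerm vx vy)⁻¹ (castL x) = castL (vx⁻¹ x) := by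
  apply (joinPerm vx vy).injective
  rw [Equiv.Perm.apply_inv_self, joinPerm_castL, Equiv.Perm.apply_inv_self]

lemma joinPerm_inv_castR (vx : Equiv.Perm (Fin m)) (vy : Equiv.Perm (Fin k)) (x : Fin k) :
    (joinPerm vx vy)⁻¹ (castR x) = castR (vy⁻¹ x) := by
  apply (joinPerm vx vy).injective
  rw [Equiv.Perm.apply_inv_self, joinPerm_castR, Equiv.Perm.apply_inv_self]

lemma conj_join (vx : Equiv.Perm (Fin m)) (vy : Equiv.Perm (Fin k))
    (f : Fin m → Option (Fin m)) (g : Fin k → Option (Fin k)) :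
    conjPT (joinPerm vx vy) (joinPT f g) = joinPT (conjPT vx f) (conjPT vy g) := by
  funext x
  rcases cases_LR x with ⟨i, rfl⟩ | ⟨j, rfl⟩
  · show (joinPT f g ((joinPerm vx vy)⁻¹ (castL i))).map _ = _
    rw [joinPerm_inv_castL, joinPT_castL, joinPT_castL]
    show ((f _).map castL).map ⇑(joinPerm vx vy) = ((f _).map ⇑vx).map castL
    rw [Option.map_map, Option.map_map]
    congr 1
    funext z
    exact joinPerm_castL vx vy z
  · show (joinPT f g ((joinPerm vx vy)⁻¹ (castR j))).map _ = _
    rw [joinPerm_inv_castR, joinPT_castR, joinPT_castR]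
    show ((g _).map castR).map ⇑(joinPerm vx vy) = ((g _).map ⇑vy).map castR
    rw [Option.map_map, Option.map_map]
    congr 1
    funext z
    exact joinPerm_castR vx vy z

lemma blk_decomp {v : Equiv.Perm (Fin (m+k))} (hv : Blk v) :
    ∃ (vx : Equiv.Perm (Fin m)) (vy : Equiv.Perm (Fin k)), v = joinPerm vx vy := by
  have hvi := Blk_inv hv
  have hR : ∀ j : Fin k, ¬ (v (castR j)).val < m :=
    fun j hc => castR_not_lt j ((hv _).mp hc)
  have hRi : ∀ j : Fin k, ¬ (v⁻¹ (castR j)).val < m :=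
    fun j hc => castR_not_lt j ((hvi _).mp hc)
  refine ⟨⟨fun i => ⟨(v (castL i)).val, (hv _).mpr i.2⟩,
          fun i => ⟨(v⁻¹ (castL i)).val, (hvi _).mpr i.2⟩, ?_, ?_⟩,
         ⟨fun j => ⟨(v (castR j)).val - m, by have := (v (castR (m := m) j)).2; have := hR j; omega⟩,
          fun j => ⟨(v⁻¹ (castR j)).val - m, by
            have := (v⁻¹ (castR (m := m) j)).2; have := hRi j; omega⟩, ?_, ?_⟩, ?_⟩
  · intro i
    apply Fin.ext
    show (v⁻¹ (castL ⟨(v (castL i)).val, _⟩)).val = i.val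
    have h1 : castL (k := k) ⟨(v (castL i)).val, (hv _).mpr i.2⟩ = v (castL i) := Fin.ext rfl
    rw [h1, Equiv.Perm.inv_apply_self]
    rfl
  · intro i
    apply Fin.ext
    show (v (castL ⟨(v⁻¹ (castL i)).val, _⟩)).val = i.val
    have h1 : castL (k := k) ⟨(v⁻¹ (castL i)).val, (hvi _).mpr i.2⟩ = v⁻¹ (castL i) := Fin.ext rfl
    rw [h1, Equiv.Perm.apply_inv_self]
    rfl
  · intro j
    apply Fin.ext
    show (v⁻¹ (castR ⟨(v (castR j)).val - m, _⟩)).val - m = j.val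
    have h1 : castR (m := m) (⟨(v (castR j)).val - m,
        by have := (v (castR (m := m) j)).2; have := hR j; omega⟩ : Fin k) = v (castR j) :=
      Fin.ext (by simp only [castR_val, Fin.val_mk]; have := hR j; omega)
    rw [h1, Equiv.Perm.inv_apply_self, castR_val]
    omega
  · intro j
    apply Fin.ext
    show (v (castR ⟨(v⁻¹ (castR j)).val - m, _⟩)).val - m = j.val
    have h1 : castR (m := m) (⟨(v⁻¹ (castR j)).val - m,
        by have := (v⁻¹ (castR (m := m) j)).2; have := hRi j; omega⟩ : Fin k) = v⁻¹ (castR j) :=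
      Fin.ext (by simp only [castR_val, Fin.val_mk]; have := hRi j; omega)
    rw [h1, Equiv.Perm.apply_inv_self, castR_val]
    omega
  · apply perm_ext_LR
    · intro i
      rw [joinPerm_castL]
      exact Fin.ext rfl
    · intro j
      rw [joinPerm_castR]
      refine Fin.ext ?_
      rw [castR_val]
      show (v (castR j)).val = m + ((v (castR j)).val - m)
      have := hR j
      omega

-- descendant lemmas
lemma desc_conj {n : ℕ} {u : Equiv.Perm (Fin n)} {f : Fin n → Option (Fin n)}
    (hu : conjPT u f = f) {x y : Fin n} (h : Desc f x y) : Desc f (u x) (u y) := by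
  obtain ⟨j, hj⟩ := h
  exact ⟨j, by rw [iterPT_conj hu, hj]; rfl⟩

lemma descL_iff {f : Fin m → Option (Fin m)} {g : Fin k → Option (Fin k)} (z a : Fin m) :
    Desc (joinPT f g) (castL z) (castL a) ↔ Desc f z a := by
  constructor
  · rintro ⟨j, hj⟩
    rw [iter_join_castL] at hj
    obtain ⟨w, hw, hcast⟩ := Option.map_eq_some_iff.mp hj
    exact ⟨j, by rw [hw, castL_inj hcast]⟩
  · rintro ⟨j, hj⟩
    exact ⟨j, by rw [iter_join_castL, hj]; rfl⟩

lemma descR_iff {f : Fin m → Option (Fin m)} {g : Fin k → Option (Fin k)} (z a : Fin k) :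
    Desc (joinPT f g) (castR z) (castR a) ↔ Desc g z a := by
  constructor
  · rintro ⟨j, hj⟩
    rw [iter_join_castR] at hj
    obtain ⟨w, hw, hcast⟩ := Option.map_eq_some_iff.mp hj
    exact ⟨j, by rw [hw, castR_inj hcast]⟩
  · rintro ⟨j, hj⟩
    exact ⟨j, by rw [iter_join_castR, hj]; rfl⟩

lemma descL_lt {f : Fin m → Option (Fin m)} {g : Fin k → Option (Fin k)} (z : Fin m)
    (y : Fin (m+k)) (h : Desc (joinPT f g) (castL z) y) : y.val < m := by
  obtain ⟨j, hj⟩ := h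
  rw [iter_join_castL] at hj
  obtain ⟨w, _, hcast⟩ := Option.map_eq_some_iff.mp hj
  rw [← hcast]
  exact w.2

lemma descR_not_lt {f : Fin m → Option (Fin m)} {g : Fin k → Option (Fin k)} (z : Fin k)
    (y : Fin (m+k)) (h : Desc (joinPT f g) (castR z) y) : ¬ y.val < m := by
  obtain ⟨j, hj⟩ := h
  rw [iter_join_castR] at hj
  obtain ⟨w, _, hcast⟩ := Option.map_eq_some_iff.mp hj
  rw [← hcast]
  exact castR_not_lt w

-- the key lemma: an automorphism of joinPT τ ν cannot move the left block into
-- the right block unless two subtrees are isomorphic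
lemma key_aux {τ : Fin m → Option (Fin m)} {ν : Fin k → Option (Fin k)}
    (hτ : Nilp τ) (hν : Nilp ν)
    (hdisj : ¬ ∃ (a : Fin m) (b : Fin k), τ a = none ∧ ν b = none ∧
      ∃ e : {z : Fin m // Desc τ z a} ≃ {z : Fin k // Desc ν z b},
        ∀ p q : {z : Fin m // Desc τ z a},
          τ p.1 = some q.1 ↔ ν (e p).1 = some (e q).1)
    {u : Equiv.Perm (Fin (m+k))} (hu : conjPT u (joinPT τ ν) = joinPT τ ν)
    (z0 : Fin m) (huz : ¬ (u (castL z0)).val < m) : False := by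
  have hui : conjPT u⁻¹ (joinPT τ ν) = joinPT τ ν := conjPT_inv_self hu
  obtain ⟨a, j, hja, hra⟩ := exists_root (nilp_join hτ hν) (castL z0)
  rw [iter_join_castL] at hja
  obtain ⟨a₀, hja₀, rfl⟩ := Option.map_eq_some_iff.mp hja
  -- root of τ
  have hta : τ a₀ = none := by
    have h1 := joinPT_castL τ ν a₀
    rw [hra] at h1
    cases h : τ a₀ with
    | none => rfl
    | some w => rw [h] at h1; simp at h1
  -- u sends the root into the right block
  have hDza : Desc (joinPT τ ν) (castL z0) (castL a₀) :=
    ⟨j, by rw [iter_join_castL, hja₀]; rfl⟩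
  have hDuza := desc_conj hu hDza
  have hz1 : u (castL z0) = castR (m := m) ⟨(u (castL z0)).val - m,
      by have := (u (castL z0)).2; omega⟩ :=
    Fin.ext (by simp only [castR_val, Fin.val_mk]; omega)
  have hub : ¬ (u (castL a₀)).val < m := by
    rw [hz1] at hDuza
    exact descR_not_lt _ _ hDuza
  set b : Fin k := ⟨(u (castL a₀)).val - m, by have := (u (castL a₀)).2; omega⟩ with hbdef
  have hcb : castR (m := m) b = u (castL a₀) :=
    Fin.ext (by show m + ((u (castL a₀)).val - m) = (u (castL a₀)).val; omega)
  -- root of ν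
  have hnb : ν b = none := by
    have h1 : joinPT τ ν (u (castL a₀)) = none := by
      rw [conjPT_apply hu, hra]; rfl
    rw [← hcb, joinPT_castR] at h1
    cases h : ν b with
    | none => rfl
    | some w => rw [h] at h1; simp at h1
  -- image of τ-subtree vertices lands in the right block
  have hFlt : ∀ z : Fin m, Desc τ z a₀ → ¬ (u (castL z)).val < m := by
    intro z hz hc
    have hd : Desc (joinPT τ ν) (u (castL z)) (castR b) := by
      rw [hcb]
      exact desc_conj hu ((descL_iff z a₀).mpr hz)
    have h2 : u (castL z) = castL (k := k) ⟨(u (castL z)).val, hc⟩ := Fin.ext rfl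
    rw [h2] at hd
    exact castR_not_lt b (descL_lt _ _ hd)
  have hFlt2 : ∀ z : Fin m, Desc τ z a₀ → (u (castL z)).val - m < k := by
    intro z hz; have := (u (castL z)).2; have := hFlt z hz; omega
  have hFcast : ∀ (z : Fin m) (hz : Desc τ z a₀),
      castR (m := m) ⟨(u (castL z)).val - m, hFlt2 z hz⟩ = u (castL z) := by
    intro z hz
    exact Fin.ext (by simp only [castR_val, Fin.val_mk]; have := hFlt z hz; omega)
  have hFdesc : ∀ (z : Fin m) (hz : Desc τ z a₀),
      Desc ν ⟨(u (castL z)).val - m, hFlt2 z hz⟩ b := by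
    intro z hz
    apply (descR_iff (f := τ) _ _).mp
    rw [hFcast z hz, hcb]
    exact desc_conj hu ((descL_iff z a₀).mpr hz)
  -- preimage of ν-subtree vertices lands in the left block
  have hGd : ∀ z : Fin k, Desc ν z b → Desc (joinPT τ ν) (u⁻¹ (castR z)) (castL a₀) := by
    intro z hz
    have h1 : Desc (joinPT τ ν) (castR z) (castR b) := (descR_iff z b).mpr hz
    have h2 := desc_conj hui h1
    rwa [hcb, Equiv.Perm.inv_apply_self] at h2
  have hGlt : ∀ z : Fin k, Desc ν z b → (u⁻¹ (castR z)).val < m := by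
    intro z hz
    by_contra hc
    have h2 : u⁻¹ (castR (m := m) z) = castR (m := m) ⟨(u⁻¹ (castR z)).val - m,
        by have := (u⁻¹ (castR (m := m) z)).2; omega⟩ :=
      Fin.ext (by simp only [castR_val, Fin.val_mk]; omega)
    have h3 := hGd z hz
    rw [h2] at h3
    exact descR_not_lt _ _ h3 a₀.2
  have hGcast : ∀ (z : Fin k) (hz : Desc ν z b),
      castL (k := k) ⟨(u⁻¹ (castR z)).val, hGlt z hz⟩ = u⁻¹ (castR z) :=
    fun z hz => Fin.ext rfl
  have hGdesc : ∀ (z : Fin k) (hz : Desc ν z b),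
      Desc τ ⟨(u⁻¹ (castR z)).val, hGlt z hz⟩ a₀ := by
    intro z hz
    apply (descL_iff (g := ν) _ _).mp
    rw [hGcast z hz]
    exact hGd z hz
  -- the forbidden isomorphism
  apply hdisj
  refine ⟨a₀, b, hta, hnb,
    ⟨⟨fun p => ⟨⟨(u (castL p.1)).val - m, hFlt2 p.1 p.2⟩, hFdesc p.1 p.2⟩,
      fun q => ⟨⟨(u⁻¹ (castR q.1)).val, hGlt q.1 q.2⟩, hGdesc q.1 q.2⟩, ?_, ?_⟩, ?_⟩⟩
  · intro p
    apply Subtype.ext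
    apply Fin.ext
    show (u⁻¹ (castR ⟨(u (castL p.1)).val - m, _⟩)).val = p.1.val
    rw [hFcast p.1 p.2, Equiv.Perm.inv_apply_self]
    rfl
  · intro q
    apply Subtype.ext
    apply Fin.ext
    show (u (castL ⟨(u⁻¹ (castR q.1)).val, _⟩)).val - m = q.1.val
    rw [hGcast q.1 q.2, Equiv.Perm.apply_inv_self, castR_val]
    omega
  · intro p q
    show τ p.1 = some q.1 ↔ ν ⟨(u (castL p.1)).val - m, _⟩ = some ⟨(u (castL q.1)).val - m, _⟩
    constructor
    · intro h
      have h1 : joinPT τ ν (castL p.1) = some (castL q.1) := by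
        rw [joinPT_castL, h]; rfl
      have h2 : joinPT τ ν (u (castL p.1)) = some (u (castL q.1)) := by
        rw [conjPT_apply hu, h1]; rfl
      rw [← hFcast p.1 p.2, ← hFcast q.1 q.2, joinPT_castR] at h2
      obtain ⟨w, hw, hcast⟩ := Option.map_eq_some_iff.mp h2
      rw [hw, castR_inj hcast]
    · intro h
      have h2 : joinPT τ ν (u (castL p.1)) = some (u (castL q.1)) := by
        rw [← hFcast p.1 p.2, ← hFcast q.1 q.2, joinPT_castR, h]; rfl
      rw [conjPT_apply hu] at h2
      obtain ⟨w, hw, hcast⟩ := Option.map_eq_some_iff.mp h2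
      have hw2 : w = castL q.1 := u.injective hcast
      rw [hw2] at hw
      rw [joinPT_castL] at hw
      obtain ⟨w', hw', hcast'⟩ := Option.map_eq_some_iff.mp hw
      rw [hw', castL_inj hcast']

lemma conjPT_cancel {n : ℕ} (t : Equiv.Perm (Fin n)) (g : Fin n → Option (Fin n)) :
    conjPT t⁻¹ (conjPT t g) = g := by
  rw [← conjPT_mul, inv_mul_cancel, conjPT_one]

lemma conjPT_cancel' {n : ℕ} (t : Equiv.Perm (Fin n)) (g : Fin n → Option (Fin n)) :
    conjPT t (conjPT t⁻¹ g) = g := by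
  rw [← conjPT_mul, mul_inv_cancel, conjPT_one]

section Main
variable {τ : Fin m → Option (Fin m)} {ν : Fin k → Option (Fin k)}

lemma stab_blk (hτ : Nilp τ) (hν : Nilp ν)
    (hdisj : ¬ ∃ (a : Fin m) (b : Fin k), τ a = none ∧ ν b = none ∧
      ∃ e : {z : Fin m // Desc τ z a} ≃ {z : Fin k // Desc ν z b},
        ∀ p q : {z : Fin m // Desc τ z a},
          τ p.1 = some q.1 ↔ ν (e p).1 = some (e q).1)
    {u : Equiv.Perm (Fin (m+k))} (hu : conjPT u (joinPT τ ν) = joinPT τ ν) : Blk u := by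
  intro x
  constructor
  · intro h
    by_contra hc
    apply key_aux hτ hν hdisj (conjPT_inv_self hu) ⟨(u x).val, h⟩
    have h2 : castL (k := k) ⟨(u x).val, h⟩ = u x := Fin.ext rfl
    rw [h2, Equiv.Perm.inv_apply_self]
    exact hc
  · intro h
    by_contra hc
    apply key_aux hτ hν hdisj hu ⟨x.val, h⟩
    have h2 : castL (k := k) ⟨x.val, h⟩ = x := Fin.ext rfl
    rw [h2]
    exact hc

lemma blk_of_eq (hτ : Nilp τ) (hν : Nilp ν)
    (hdisj : ¬ ∃ (a : Fin m) (b : Fin k), τ a = none ∧ ν b = none ∧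
      ∃ e : {z : Fin m // Desc τ z a} ≃ {z : Fin k // Desc ν z b},
        ∀ p q : {z : Fin m // Desc τ z a},
          τ p.1 = some q.1 ↔ ν (e p).1 = some (e q).1)
    {u v : Equiv.Perm (Fin (m+k))} (hv : Blk v)
    (h : conjPT u (joinPT τ ν) = conjPT v (joinPT τ ν)) : Blk u := by
  have h1 : conjPT (v⁻¹ * u) (joinPT τ ν) = joinPT τ ν := by
    rw [conjPT_mul, h, conjPT_cancel]
  have h2 := stab_blk hτ hν hdisj h1
  have h3 : u = v * (v⁻¹ * u) := by group
  rw [h3]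
  exact Blk_mul hv h2

end Main

lemma nat_card_sigma {ι : Type*} [Fintype ι] (f : ι → Type*) [∀ i, Finite (f i)] :
    Nat.card (Σ i, f i) = ∑ i, Nat.card (f i) := by
  classical
  letI : ∀ i, Fintype (f i) := fun i => Fintype.ofFinite _
  simp [Nat.card_eq_fintype_card, Fintype.card_sigma]

lemma conjPT_fix_iff {n : ℕ} (t w : Equiv.Perm (Fin n)) (g : Fin n → Option (Fin n)) :
    conjPT (t⁻¹ * w * t) g = g ↔ conjPT w (conjPT t g) = conjPT t g := by
  have e1 : conjPT w (conjPT t g) = conjPT t (conjPT (t⁻¹ * w * t) g) := by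
    rw [← conjPT_mul, ← conjPT_mul]
    congr 1
    group
  constructor
  · intro h; rw [e1, h]
  · intro h
    have h2 := congrArg (conjPT t⁻¹) (e1.symm.trans h)
    rwa [conjPT_cancel, conjPT_cancel] at h2

lemma part_b {τ : Fin m → Option (Fin m)} {ν : Fin k → Option (Fin k)}
    (hτ : Nilp τ) (hν : Nilp ν)
    (hdisj : ¬ ∃ (a : Fin m) (b : Fin k), τ a = none ∧ ν b = none ∧
      ∃ e : {z : Fin m // Desc τ z a} ≃ {z : Fin k // Desc ν z b},
        ∀ p q : {z : Fin m // Desc τ z a},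
          τ p.1 = some q.1 ↔ ν (e p).1 = some (e q).1)
    (w : Equiv.Perm (Fin (m+k))) :
    Nat.card {u : Equiv.Perm (Fin (m+k)) // ∀ x : Fin (m+k), (u x).val < m ↔ x.val < m} *
      Nat.card {g : Fin (m+k) → Option (Fin (m+k)) //
        (∃ v : Equiv.Perm (Fin (m+k)), conjPT v (joinPT τ ν) = g) ∧ conjPT w g = g} =
    ∑ t : Equiv.Perm (Fin (m+k)),
      if (∀ x : Fin (m+k), ((t⁻¹ * w * t) x).val < m ↔ x.val < m) then
        Nat.card {g : Fin (m+k) → Option (Fin (m+k)) //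
          (∃ v : Equiv.Perm (Fin (m+k)),
              (∀ x : Fin (m+k), (v x).val < m ↔ x.val < m) ∧
              conjPT v (joinPT τ ν) = g) ∧
          conjPT (t⁻¹ * w * t) g = g}
      else 0 := by
  classical
  -- abbreviations
  set σ : Fin (m+k) → Option (Fin (m+k)) := joinPT τ ν with hσ
  -- Step A : rewrite the RHS as the cardinality of one subtype of a product
  have hA : (∑ t : Equiv.Perm (Fin (m+k)),
      if (∀ x : Fin (m+k), ((t⁻¹ * w * t) x).val < m ↔ x.val < m) then
        Nat.card {g : Fin (m+k) → Option (Fin (m+k)) //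
          (∃ v : Equiv.Perm (Fin (m+k)),
              (∀ x : Fin (m+k), (v x).val < m ↔ x.val < m) ∧ conjPT v σ = g) ∧
          conjPT (t⁻¹ * w * t) g = g}
      else 0) =
      Nat.card {p : Equiv.Perm (Fin (m+k)) × (Fin (m+k) → Option (Fin (m+k))) //
        (∀ x : Fin (m+k), ((p.1⁻¹ * w * p.1) x).val < m ↔ x.val < m) ∧
        ((∃ v : Equiv.Perm (Fin (m+k)),
            (∀ x : Fin (m+k), (v x).val < m ↔ x.val < m) ∧ conjPT v σ = p.2) ∧
          conjPT (p.1⁻¹ * w * p.1) p.2 = p.2)} := by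
    rw [Nat.card_congr (Equiv.subtypeProdEquivSigmaSubtype
      (fun (t : Equiv.Perm (Fin (m+k))) (g : Fin (m+k) → Option (Fin (m+k))) =>
        (∀ x : Fin (m+k), ((t⁻¹ * w * t) x).val < m ↔ x.val < m) ∧
        ((∃ v : Equiv.Perm (Fin (m+k)),
            (∀ x : Fin (m+k), (v x).val < m ↔ x.val < m) ∧ conjPT v σ = g) ∧
          conjPT (t⁻¹ * w * t) g = g)))]
    rw [nat_card_sigma]
    apply Finset.sum_congr rfl
    intro t _
    by_cases h : ∀ x : Fin (m+k), ((t⁻¹ * w * t) x).val < m ↔ x.val < m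
    · rw [if_pos h]
      exact (Nat.card_congr (Equiv.subtypeEquivRight (fun g => ⟨fun hp => hp.2, fun hp => ⟨h, hp⟩⟩))).symm
    · rw [if_neg h]
      haveI : IsEmpty {g : Fin (m+k) → Option (Fin (m+k)) //
          (∀ x : Fin (m+k), ((t⁻¹ * w * t) x).val < m ↔ x.val < m) ∧
          ((∃ v : Equiv.Perm (Fin (m+k)),
              (∀ x : Fin (m+k), (v x).val < m ↔ x.val < m) ∧ conjPT v σ = g) ∧
            conjPT (t⁻¹ * w * t) g = g)} := ⟨fun g => h g.2.1⟩
      exact Nat.card_of_isEmpty.symm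
  rw [hA, ← Nat.card_prod]
  -- Step B : explicit bijection
  apply Nat.card_congr
  -- choice of a witness permutation for each fixed point of the big orbit
  have hsel : ∀ h : {g : Fin (m+k) → Option (Fin (m+k)) //
      (∃ v : Equiv.Perm (Fin (m+k)), conjPT v σ = g) ∧ conjPT w g = g},
      ∃ v : Equiv.Perm (Fin (m+k)), conjPT v σ = h.1 := fun h => h.2.1
  refine Equiv.ofBijective
    (fun uh => ⟨((hsel uh.2).choose * (uh.1.1)⁻¹, conjPT uh.1.1 σ), ?_, ?_, ?_⟩) ⟨?_, ?_⟩
  · -- block condition for t⁻¹ w t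
    obtain ⟨⟨u, hu⟩, h⟩ := uh
    have hs := (hsel h).choose_spec
    set s := (hsel h).choose with hsdef
    have hc : conjPT (s⁻¹ * w * s) σ = σ := by
      rw [conjPT_mul, conjPT_mul, hs, h.2.2, ← hs, conjPT_cancel]
    have hblk : Blk (s⁻¹ * w * s) := stab_blk hτ hν hdisj hc
    have ht : (s * u⁻¹)⁻¹ * w * (s * u⁻¹) = u * (s⁻¹ * w * s) * u⁻¹ := by group
    show ∀ x, (((s * u⁻¹)⁻¹ * w * (s * u⁻¹)) x).val < m ↔ x.val < m
    rw [ht]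
    exact Blk_mul (Blk_mul hu hblk) (Blk_inv hu)
  · -- membership in the small orbit
    exact ⟨uh.1.1, uh.1.2, rfl⟩
  · -- fixed-point property
    obtain ⟨⟨u, hu⟩, h⟩ := uh
    have hs := (hsel h).choose_spec
    set s := (hsel h).choose with hsdef
    have hc : conjPT (s⁻¹ * w * s) σ = σ := by
      rw [conjPT_mul, conjPT_mul, hs, h.2.2, ← hs, conjPT_cancel]
    have ht : (s * u⁻¹)⁻¹ * w * (s * u⁻¹) = u * (s⁻¹ * w * s) * u⁻¹ := by group
    show conjPT ((s * u⁻¹)⁻¹ * w * (s * u⁻¹)) (conjPT u σ) = conjPT u σ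
    rw [ht, conjPT_mul, conjPT_mul, conjPT_cancel, hc]
  · -- injectivity
    rintro ⟨⟨u, hu⟩, h⟩ ⟨⟨u', hu'⟩, h'⟩ heq
    have hval := congrArg (fun (z : {p : Equiv.Perm (Fin (m+k)) ×
        (Fin (m+k) → Option (Fin (m+k))) // _}) => z.1) heq
    simp only [Prod.mk.injEq] at hval
    obtain ⟨heq1, heq2⟩ := hval
    have hs := (hsel h).choose_spec
    have hs' := (hsel h').choose_spec
    have hh1 : conjPT ((hsel h).choose * u⁻¹) (conjPT u σ) = h.1 := by
      rw [← conjPT_mul]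
      have hg : (hsel h).choose * u⁻¹ * u = (hsel h).choose := by group
      rw [hg, hs]
    have hh2 : conjPT ((hsel h').choose * u'⁻¹) (conjPT u' σ) = h'.1 := by
      rw [← conjPT_mul]
      have hg : (hsel h').choose * u'⁻¹ * u' = (hsel h').choose := by group
      rw [hg, hs']
    have hhh : h = h' := by
      apply Subtype.ext
      rw [← hh1, ← hh2, heq1, heq2]
    subst hhh
    have huu : u = u' := by
      have := mul_left_cancel heq1
      exact inv_injective this
    subst huu
    rfl
  · -- surjectivity
    rintro ⟨⟨t, g⟩, hblk, horb, hfix⟩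
    have hXmem : (∃ v : Equiv.Perm (Fin (m+k)), conjPT v σ = conjPT t g) ∧
        conjPT w (conjPT t g) = conjPT t g := by
      constructor
      · obtain ⟨v, _, hv⟩ := horb
        exact ⟨t * v, by rw [conjPT_mul, hv]⟩
      · exact (conjPT_fix_iff t w g).mp hfix
    set h' : {g : Fin (m+k) → Option (Fin (m+k)) //
        (∃ v : Equiv.Perm (Fin (m+k)), conjPT v σ = g) ∧ conjPT w g = g} :=
      ⟨conjPT t g, hXmem⟩ with hh'def
    have hs' := (hsel h').choose_spec
    have hublk : ∀ x : Fin (m+k), ((t⁻¹ * (hsel h').choose) x).val < m ↔ x.val < m := by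
      obtain ⟨v, hvblk, hv⟩ := horb
      have heq : conjPT (t⁻¹ * (hsel h').choose) σ = conjPT v σ := by
        rw [conjPT_mul, hs']
        show conjPT t⁻¹ (conjPT t g) = conjPT v σ
        rw [conjPT_cancel, hv]
      exact blk_of_eq hτ hν hdisj hvblk heq
    refine ⟨(⟨t⁻¹ * (hsel h').choose, hublk⟩, h'), ?_⟩
    apply Subtype.ext
    show ((hsel h').choose * (t⁻¹ * (hsel h').choose)⁻¹, conjPT (t⁻¹ * (hsel h').choose) σ)
      = (t, g)
    have h1 : (hsel h').choose * (t⁻¹ * (hsel h').choose)⁻¹ = t := by group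
    have h2 : conjPT (t⁻¹ * (hsel h').choose) σ = g := by
      rw [conjPT_mul, hs']
      show conjPT t⁻¹ (conjPT t g) = g
      rw [conjPT_cancel]
    rw [h1, h2]

/-- if a labeled rooted forest σ on `n = m + k` vertices is the
disjoint union τ ∪ ν of forests having no isomorphic connected component in
common (no root `a` of τ and root `b` of ν carry isomorphic subtrees), then
`o(σ) ≅ Ind_{S_m × S_k}^{S_n} (o(τ) ⊠ o(ν))`, equivalently
`ch o(σ) = ch o(τ) ⬝ ch o(ν)`.  We state this as:
(a) the `S_m × S_k`-orbit of σ is exactly `{joinPT x y : x ∈ o(τ), y ∈ o(ν)}`, and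
(b) the character (fixed-point count) of the `S_{m+k}`-orbit of σ equals the
induced character from the Young subgroup `S_m × S_k`. -/
theorem stmt10 {m k : ℕ} (τ : Fin m → Option (Fin m)) (ν : Fin k → Option (Fin k))
    (hτ : Nilp τ) (hν : Nilp ν)
    (hdisj : ¬ ∃ (a : Fin m) (b : Fin k), τ a = none ∧ ν b = none ∧
      ∃ e : {z : Fin m // Desc τ z a} ≃ {z : Fin k // Desc ν z b},
        ∀ p q : {z : Fin m // Desc τ z a},
          τ p.1 = some q.1 ↔ ν (e p).1 = some (e q).1) :
    (∀ g : Fin (m+k) → Option (Fin (m+k)),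
      (∃ v : Equiv.Perm (Fin (m+k)), (∀ x : Fin (m+k), (v x).val < m ↔ x.val < m) ∧
          conjPT v (joinPT τ ν) = g) ↔
      (∃ (x : Fin m → Option (Fin m)) (y : Fin k → Option (Fin k)),
          (∃ vx : Equiv.Perm (Fin m), conjPT vx τ = x) ∧
          (∃ vy : Equiv.Perm (Fin k), conjPT vy ν = y) ∧ g = joinPT x y)) ∧
    ∀ w : Equiv.Perm (Fin (m+k)),
      Nat.card {u : Equiv.Perm (Fin (m+k)) // ∀ x : Fin (m+k), (u x).val < m ↔ x.val < m} *
        Nat.card {g : Fin (m+k) → Option (Fin (m+k)) //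
          (∃ v : Equiv.Perm (Fin (m+k)), conjPT v (joinPT τ ν) = g) ∧ conjPT w g = g} =
      ∑ t : Equiv.Perm (Fin (m+k)),
        if (∀ x : Fin (m+k), ((t⁻¹ * w * t) x).val < m ↔ x.val < m) then
          Nat.card {g : Fin (m+k) → Option (Fin (m+k)) //
            (∃ v : Equiv.Perm (Fin (m+k)),
                (∀ x : Fin (m+k), (v x).val < m ↔ x.val < m) ∧
                conjPT v (joinPT τ ν) = g) ∧
            conjPT (t⁻¹ * w * t) g = g}
        else 0 := by
  constructor
  · intro g
    constructor
    · rintro ⟨v, hv, rfl⟩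
      obtain ⟨vx, vy, rfl⟩ := blk_decomp hv
      exact ⟨conjPT vx τ, conjPT vy ν, ⟨vx, rfl⟩, ⟨vy, rfl⟩, conj_join vx vy τ ν⟩
    · rintro ⟨x, y, ⟨vx, rfl⟩, ⟨vy, rfl⟩, rfl⟩
      exact ⟨joinPerm vx vy, Blk_joinPerm vx vy, conj_join vx vy τ ν⟩
  · exact part_b hτ hν hdisj
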